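/- Let (M,d,+) be a complete metric semigroup, κ a distortion function, and p ∈ (1,∞). The bivariate Korenblum bounded variation space (κBV(I×I,M), ρ_κ), with ρ_κ(f,g) = d(f(0,0),g(0,0)) + V_κ(f,g), is a complete metric space. -/

import Mathlib

open Finset

/-- `t` represents a partition `0 = t 0 < t 1 < ⋯ < t n = 1` of `[0,1]`. -/
def IsPartition (n : ℕ) (t : ℕ → ℝ) : Prop :=
  0 < n ∧ t 0 = 0 ∧ t n = 1 ∧ ∀ i < n, t i < t (i + 1)

/-- `κ : [0,1] → [0,1]` is a distortion function: increasing, concave,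
`κ(0) = 0`, `κ(1) = 1`, and `κ(t)/t → ∞` as `t → 0⁺`. -/
def IsDistortion (κ : ℝ → ℝ) : Prop :=
  MonotoneOn κ (Set.Icc 0 1) ∧ ConcaveOn ℝ (Set.Icc 0 1) κ
  ∧ (∀ t ∈ Set.Icc (0:ℝ) 1, κ t ∈ Set.Icc (0:ℝ) 1)
  ∧ κ 0 = 0 ∧ κ 1 = 1
  ∧ Filter.Tendsto (fun t => κ t / t) (nhdsWithin 0 (Set.Ioi 0)) Filter.atTop

variable {M : Type*} [MetricSpace M] [AddCommSemigroup M]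

noncomputable def kSum1 (κ : ℝ → ℝ) (p : ℝ) (f : ℝ → ℝ → M) (n : ℕ) (t : ℕ → ℝ) : ℝ :=
  (∑ i ∈ range n, dist (f (t (i + 1)) 0) (f (t i) 0) / κ (t (i + 1) - t i)) ^ (1 / p)

noncomputable def kSum2 (κ : ℝ → ℝ) (p : ℝ) (f : ℝ → ℝ → M) (m : ℕ) (s : ℕ → ℝ) : ℝ :=
  (∑ j ∈ range m, dist (f 0 (s (j + 1))) (f 0 (s j)) / κ (s (j + 1) - s j)) ^ (1 / p)

noncomputable def kSum12 (κ : ℝ → ℝ) (p : ℝ) (f : ℝ → ℝ → M) (n : ℕ) (t : ℕ → ℝ)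
    (m : ℕ) (s : ℕ → ℝ) : ℝ :=
  (∑ j ∈ range m, ∑ i ∈ range n,
    dist (f (t (i + 1)) (s (j + 1)) + f (t i) (s j))
         (f (t (i + 1)) (s j) + f (t i) (s (j + 1)))
      / (κ (t (i + 1) - t i) * κ (s (j + 1) - s j))) ^ (1 / p)

noncomputable def kSum1J (κ : ℝ → ℝ) (p : ℝ) (f g : ℝ → ℝ → M) (n : ℕ) (t : ℕ → ℝ) : ℝ :=
  (∑ i ∈ range n,
    dist (f (t (i + 1)) 0 + g (t i) 0) (f (t i) 0 + g (t (i + 1)) 0)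
      / κ (t (i + 1) - t i)) ^ (1 / p)

noncomputable def kSum2J (κ : ℝ → ℝ) (p : ℝ) (f g : ℝ → ℝ → M) (m : ℕ) (s : ℕ → ℝ) : ℝ :=
  (∑ j ∈ range m,
    dist (f 0 (s (j + 1)) + g 0 (s j)) (f 0 (s j) + g 0 (s (j + 1)))
      / κ (s (j + 1) - s j)) ^ (1 / p)

noncomputable def kSum12J (κ : ℝ → ℝ) (p : ℝ) (f g : ℝ → ℝ → M) (n : ℕ) (t : ℕ → ℝ)
    (m : ℕ) (s : ℕ → ℝ) : ℝ :=
  (∑ j ∈ range m, ∑ i ∈ range n,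
    dist (f (t (i + 1)) (s (j + 1)) + f (t i) (s j)
            + g (t (i + 1)) (s j) + g (t i) (s (j + 1)))
         (g (t (i + 1)) (s (j + 1)) + g (t i) (s j)
            + f (t (i + 1)) (s j) + f (t i) (s (j + 1)))
      / (κ (t (i + 1) - t i) * κ (s (j + 1) - s j))) ^ (1 / p)

def kSet1 (κ : ℝ → ℝ) (p : ℝ) (f : ℝ → ℝ → M) : Set ℝ :=
  {x | ∃ n t, IsPartition n t ∧ x = kSum1 κ p f n t}

def kSet2 (κ : ℝ → ℝ) (p : ℝ) (f : ℝ → ℝ → M) : Set ℝ :=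
  {x | ∃ m s, IsPartition m s ∧ x = kSum2 κ p f m s}

def kSet12 (κ : ℝ → ℝ) (p : ℝ) (f : ℝ → ℝ → M) : Set ℝ :=
  {x | ∃ n t m s, IsPartition n t ∧ IsPartition m s ∧ x = kSum12 κ p f n t m s}

/-- Total Korenblum variation `V_κ(f)`. -/
noncomputable def VKap (κ : ℝ → ℝ) (p : ℝ) (f : ℝ → ℝ → M) : ℝ :=
  sSup (kSet1 κ p f) + sSup (kSet2 κ p f) + sSup (kSet12 κ p f)

/-- `f` has bounded bivariate Korenblum variation. -/
def MemKapBV (κ : ℝ → ℝ) (p : ℝ) (f : ℝ → ℝ → M) : Prop :=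
  BddAbove (kSet1 κ p f) ∧ BddAbove (kSet2 κ p f) ∧ BddAbove (kSet12 κ p f)

/-- Joint Korenblum variation over a fixed pair of partitions, `V_κ(f,g,Π×Π*)`. -/
noncomputable def VKapPart (κ : ℝ → ℝ) (p : ℝ) (f g : ℝ → ℝ → M) (n : ℕ) (t : ℕ → ℝ)
    (m : ℕ) (s : ℕ → ℝ) : ℝ :=
  kSum1J κ p f g n t + kSum2J κ p f g m s + kSum12J κ p f g n t m s

def kSetJ (κ : ℝ → ℝ) (p : ℝ) (f g : ℝ → ℝ → M) : Set ℝ :=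
  {x | ∃ n t m s, IsPartition n t ∧ IsPartition m s ∧ x = VKapPart κ p f g n t m s}

/-- Joint Korenblum variation `V_κ(f,g)`. -/
noncomputable def VKapJ (κ : ℝ → ℝ) (p : ℝ) (f g : ℝ → ℝ → M) : ℝ :=
  sSup (kSetJ κ p f g)

/-- The metric `ρ_κ(f,g) = d(f(0,0), g(0,0)) + V_κ(f,g)`. -/
noncomputable def rhoKap (κ : ℝ → ℝ) (p : ℝ) (f g : ℝ → ℝ → M) : ℝ :=
  dist (f 0 0) (g 0 0) + VKapJ κ p f g

section Aux
set_option linter.unusedSectionVars false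
set_option linter.unusedVariables false

open Filter

variable {κ : ℝ → ℝ} {p : ℝ}

lemma rpow_subadd (hp : 1 < p) {a b : ℝ} (ha : 0 ≤ a) (hb : 0 ≤ b) :
    (a + b) ^ (1 / p) ≤ a ^ (1 / p) + b ^ (1 / p) := by
  have hz : 0 ≤ 1 / p := by positivity
  have hz1 : 1 / p ≤ 1 := by
    rw [div_le_one (by linarith)]; linarith
  have h := NNReal.rpow_add_le_add_rpow a.toNNReal b.toNNReal hz hz1
  have := NNReal.coe_le_coe.mpr h
  simpa [Real.toNNReal_add ha hb, NNReal.coe_rpow,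
    Real.coe_toNNReal _ ha, Real.coe_toNNReal _ hb] using this

lemma scalar_key (hp : 1 < p) {S A B : ℝ} (hA : 0 ≤ A) (hB : 0 ≤ B) (hS : 0 ≤ S)
    (h : S ≤ A + B) : S ^ (1 / p) ≤ A ^ (1 / p) + B ^ (1 / p) :=
  le_trans (Real.rpow_le_rpow hS h (by positivity)) (rpow_subadd hp hA hB)

lemma pow_small (hp : 1 < p) {x : ℝ} (hx : 0 ≤ x) (hx1 : x ≤ 1) : x ^ p ≤ x := by
  rcases eq_or_lt_of_le hx with h | h
  · rw [← h, Real.zero_rpow (by linarith)]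
  · calc x ^ p ≤ x ^ (1:ℝ) := Real.rpow_le_rpow_of_exponent_ge h hx1 (le_of_lt hp)
    _ = x := Real.rpow_one x

lemma rpow_inv_p (hp : 1 < p) {S : ℝ} (hS : 0 ≤ S) : (S ^ (1/p)) ^ p = S := by
  rw [← Real.rpow_mul hS, one_div_mul_cancel (by linarith : p ≠ 0), Real.rpow_one]

lemma IsPartition.mono {n : ℕ} {t : ℕ → ℝ} (h : IsPartition n t) :
    ∀ j ≤ n, ∀ i ≤ j, t i ≤ t j := by
  intro j hj
  induction j with
  | zero => intro i hi; interval_cases i; rfl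
  | succ k ih =>
    intro i hi
    rcases Nat.lt_or_ge i (k+1) with h' | h'
    · exact le_trans (ih (by omega) i (by omega)) (le_of_lt (h.2.2.2 k (by omega)))
    · have : i = k + 1 := by omega
      rw [this]

lemma IsPartition.mem {n : ℕ} {t : ℕ → ℝ} (h : IsPartition n t) {i : ℕ} (hi : i ≤ n) :
    t i ∈ Set.Icc (0:ℝ) 1 := by
  constructor
  · rw [← h.2.1]; exact h.mono i hi 0 (by omega)
  · rw [← h.2.2.1]; exact h.mono n le_rfl i hi

lemma IsPartition.gap_pos {n : ℕ} {t : ℕ → ℝ} (h : IsPartition n t) {i : ℕ} (hi : i < n) :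
    0 < t (i+1) - t i := sub_pos.mpr (h.2.2.2 i hi)

lemma IsPartition.gap_mem {n : ℕ} {t : ℕ → ℝ} (h : IsPartition n t) {i : ℕ} (hi : i < n) :
    t (i+1) - t i ∈ Set.Icc (0:ℝ) 1 := by
  constructor
  · exact le_of_lt (h.gap_pos hi)
  · have h1 := (h.mem (i := i) (by omega)).1
    have h2 := (h.mem (i := i+1) (by omega)).2
    linarith

lemma kappa_nonneg (hκ : IsDistortion κ) {x : ℝ} (hx : x ∈ Set.Icc (0:ℝ) 1) : 0 ≤ κ x :=
  (hκ.2.2.1 x hx).1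

lemma kappa_le_one (hκ : IsDistortion κ) {x : ℝ} (hx : x ∈ Set.Icc (0:ℝ) 1) : κ x ≤ 1 :=
  (hκ.2.2.1 x hx).2

lemma kappa_pos (hκ : IsDistortion κ) {x : ℝ} (hx : 0 < x) (hx1 : x ≤ 1) : 0 < κ x := by
  have h := hκ.2.2.2.2.2.eventually_ge_atTop 1
  rw [eventually_nhdsWithin_iff, Metric.eventually_nhds_iff] at h
  obtain ⟨δ, hδ, hh⟩ := h
  set y := min x (δ/2) with hy
  have hy0 : 0 < y := lt_min hx (by linarith)
  have hyd : dist y 0 < δ := by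
    rw [Real.dist_eq, sub_zero, abs_of_pos hy0]
    exact lt_of_le_of_lt (min_le_right _ _) (by linarith)
  have h1 : 1 ≤ κ y / y := hh hyd (Set.mem_Ioi.mpr hy0)
  have hky : y ≤ κ y := by
    rw [le_div_iff₀ hy0, one_mul] at h1; exact h1
  have : y ≤ x := min_le_left _ _
  calc (0:ℝ) < y := hy0
  _ ≤ κ y := hky
  _ ≤ κ x := hκ.1 ⟨le_of_lt hy0, by linarith⟩ ⟨le_of_lt hx, hx1⟩ this

end Aux
section Aux2
set_option linter.unusedSectionVars false
set_option linter.unusedVariables false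

open Filter

variable {M : Type*} [MetricSpace M] [AddCommSemigroup M] {κ : ℝ → ℝ} {p : ℝ}

variable (hd : ∀ u v w : M, dist (u + w) (v + w) = dist u v)
include hd

lemma dist4 (a b c d : M) : dist (a + c) (b + d) ≤ dist a b + dist c d := by
  calc dist (a + c) (b + d) ≤ dist (a + c) (b + c) + dist (b + c) (b + d) := dist_triangle _ _ _
  _ = dist a b + dist c d := by
      rw [hd, show b + c = c + b by ac_rfl, show b + d = d + b by ac_rfl, hd, dist_comm c d]

lemma jtri (x x' y y' z z' : M) :
    dist (x + y') (y + x') ≤ dist (x + z') (z + x') + dist (z + y') (y + z') := by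
  have e1 : dist (x + y') (y + x') = dist ((x + z') + (z + y')) ((z + x') + (y + z')) := by
    rw [show (x + z') + (z + y') = (x + y') + (z + z') by ac_rfl,
        show (z + x') + (y + z') = (y + x') + (z + z') by ac_rfl, hd]
  rw [e1]
  exact dist4 hd _ _ _ _

lemma jtri2 (x x' z z' : M) : dist x x' ≤ dist (x + z') (z + x') + dist z z' := by
  have e1 : dist x x' = dist ((x + z') + z) ((z + x') + z') := by
    rw [show (x + z') + z = x + (z' + z) by ac_rfl,
        show (z + x') + z' = x' + (z' + z) by ac_rfl, hd]
  rw [e1]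
  exact dist4 hd _ _ _ _

omit hd

lemma term_nonneg (hκ : IsDistortion κ) {x : ℝ} (hx : x ∈ Set.Icc (0:ℝ) 1) (d : ℝ)
    (hdd : 0 ≤ d) : 0 ≤ d / κ x :=
  div_nonneg hdd (kappa_nonneg hκ hx)

lemma kSum1_nonneg (hκ : IsDistortion κ) (f : ℝ → ℝ → M) {n : ℕ} {t : ℕ → ℝ}
    (ht : IsPartition n t) : 0 ≤ kSum1 κ p f n t :=
  Real.rpow_nonneg (Finset.sum_nonneg fun i hi =>
    term_nonneg hκ (ht.gap_mem (Finset.mem_range.mp hi)) _ dist_nonneg) _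

lemma kSum2_nonneg (hκ : IsDistortion κ) (f : ℝ → ℝ → M) {m : ℕ} {s : ℕ → ℝ}
    (hs : IsPartition m s) : 0 ≤ kSum2 κ p f m s :=
  Real.rpow_nonneg (Finset.sum_nonneg fun j hj =>
    term_nonneg hκ (hs.gap_mem (Finset.mem_range.mp hj)) _ dist_nonneg) _

lemma kSum12_nonneg (hκ : IsDistortion κ) (f : ℝ → ℝ → M) {n m : ℕ} {t s : ℕ → ℝ}
    (ht : IsPartition n t) (hs : IsPartition m s) : 0 ≤ kSum12 κ p f n t m s :=
  Real.rpow_nonneg (Finset.sum_nonneg fun j hj => Finset.sum_nonneg fun i hi =>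
    div_nonneg dist_nonneg (mul_nonneg (kappa_nonneg hκ (ht.gap_mem (Finset.mem_range.mp hi)))
      (kappa_nonneg hκ (hs.gap_mem (Finset.mem_range.mp hj))))) _

lemma kSum1J_nonneg (hκ : IsDistortion κ) (f g : ℝ → ℝ → M) {n : ℕ} {t : ℕ → ℝ}
    (ht : IsPartition n t) : 0 ≤ kSum1J κ p f g n t :=
  Real.rpow_nonneg (Finset.sum_nonneg fun i hi =>
    term_nonneg hκ (ht.gap_mem (Finset.mem_range.mp hi)) _ dist_nonneg) _

lemma kSum2J_nonneg (hκ : IsDistortion κ) (f g : ℝ → ℝ → M) {m : ℕ} {s : ℕ → ℝ}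
    (hs : IsPartition m s) : 0 ≤ kSum2J κ p f g m s :=
  Real.rpow_nonneg (Finset.sum_nonneg fun j hj =>
    term_nonneg hκ (hs.gap_mem (Finset.mem_range.mp hj)) _ dist_nonneg) _

lemma kSum12J_nonneg (hκ : IsDistortion κ) (f g : ℝ → ℝ → M) {n m : ℕ} {t s : ℕ → ℝ}
    (ht : IsPartition n t) (hs : IsPartition m s) : 0 ≤ kSum12J κ p f g n t m s :=
  Real.rpow_nonneg (Finset.sum_nonneg fun j hj => Finset.sum_nonneg fun i hi =>
    div_nonneg dist_nonneg (mul_nonneg (kappa_nonneg hκ (ht.gap_mem (Finset.mem_range.mp hi)))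
      (kappa_nonneg hκ (hs.gap_mem (Finset.mem_range.mp hj))))) _

lemma VKapPart_nonneg (hκ : IsDistortion κ) (f g : ℝ → ℝ → M) {n m : ℕ} {t s : ℕ → ℝ}
    (ht : IsPartition n t) (hs : IsPartition m s) : 0 ≤ VKapPart κ p f g n t m s := by
  have h1 := kSum1J_nonneg (p := p) hκ f g ht
  have h2 := kSum2J_nonneg (p := p) hκ f g hs
  have h3 := kSum12J_nonneg (p := p) hκ f g ht hs
  unfold VKapPart; linarith

/-- the trivial partition -/
lemma trivPartition : IsPartition 1 (fun i => (i : ℝ)) := by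
  refine ⟨one_pos, by norm_num, by norm_num, ?_⟩
  intro i hi
  interval_cases i
  norm_num

lemma kSetJ_nonempty (f g : ℝ → ℝ → M) : (kSetJ κ p f g).Nonempty :=
  ⟨_, 1, _, 1, _, trivPartition, trivPartition, rfl⟩

lemma kSet1_nonempty (f : ℝ → ℝ → M) : (kSet1 κ p f).Nonempty :=
  ⟨_, 1, _, trivPartition, rfl⟩

lemma kSet2_nonempty (f : ℝ → ℝ → M) : (kSet2 κ p f).Nonempty :=
  ⟨_, 1, _, trivPartition, rfl⟩

lemma kSet12_nonempty (f : ℝ → ℝ → M) : (kSet12 κ p f).Nonempty :=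
  ⟨_, 1, _, 1, _, trivPartition, trivPartition, rfl⟩

end Aux2
section Aux3

set_option linter.unusedSectionVars false
set_option linter.unusedVariables false

open Filter

variable {M : Type*} [MetricSpace M] [AddCommSemigroup M] {κ : ℝ → ℝ} {p : ℝ}

lemma sum_bound1 (hp : 1 < p) {n : ℕ} {D A B K : ℕ → ℝ}
    (hK : ∀ i ∈ Finset.range n, 0 < K i)
    (hD : ∀ i ∈ Finset.range n, 0 ≤ D i)
    (hA : ∀ i ∈ Finset.range n, 0 ≤ A i)
    (hB : ∀ i ∈ Finset.range n, 0 ≤ B i)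
    (h : ∀ i ∈ Finset.range n, D i ≤ A i + B i) :
    (∑ i ∈ Finset.range n, D i / K i) ^ (1/p) ≤
      (∑ i ∈ Finset.range n, A i / K i) ^ (1/p) +
      (∑ i ∈ Finset.range n, B i / K i) ^ (1/p) := by
  apply scalar_key hp
  · exact Finset.sum_nonneg fun i hi => div_nonneg (hA i hi) (hK i hi).le
  · exact Finset.sum_nonneg fun i hi => div_nonneg (hB i hi) (hK i hi).le
  · exact Finset.sum_nonneg fun i hi => div_nonneg (hD i hi) (hK i hi).le
  · rw [← Finset.sum_add_distrib]
    apply Finset.sum_le_sum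
    intro i hi
    rw [← add_div]
    exact (div_le_div_iff_of_pos_right (hK i hi)).mpr (h i hi)

lemma sum_bound2 (hp : 1 < p) {n m : ℕ} {D A B : ℕ → ℕ → ℝ} {K : ℕ → ℕ → ℝ}
    (hK : ∀ j ∈ Finset.range m, ∀ i ∈ Finset.range n, 0 < K i j)
    (hD : ∀ j ∈ Finset.range m, ∀ i ∈ Finset.range n, 0 ≤ D i j)
    (hA : ∀ j ∈ Finset.range m, ∀ i ∈ Finset.range n, 0 ≤ A i j)
    (hB : ∀ j ∈ Finset.range m, ∀ i ∈ Finset.range n, 0 ≤ B i j)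
    (h : ∀ j ∈ Finset.range m, ∀ i ∈ Finset.range n, D i j ≤ A i j + B i j) :
    (∑ j ∈ Finset.range m, ∑ i ∈ Finset.range n, D i j / K i j) ^ (1/p) ≤
      (∑ j ∈ Finset.range m, ∑ i ∈ Finset.range n, A i j / K i j) ^ (1/p) +
      (∑ j ∈ Finset.range m, ∑ i ∈ Finset.range n, B i j / K i j) ^ (1/p) := by
  apply scalar_key hp
  · exact Finset.sum_nonneg fun j hj => Finset.sum_nonneg fun i hi =>
      div_nonneg (hA j hj i hi) (hK j hj i hi).le
  · exact Finset.sum_nonneg fun j hj => Finset.sum_nonneg fun i hi =>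
      div_nonneg (hB j hj i hi) (hK j hj i hi).le
  · exact Finset.sum_nonneg fun j hj => Finset.sum_nonneg fun i hi =>
      div_nonneg (hD j hj i hi) (hK j hj i hi).le
  · rw [← Finset.sum_add_distrib]
    apply Finset.sum_le_sum
    intro j hj
    rw [← Finset.sum_add_distrib]
    apply Finset.sum_le_sum
    intro i hi
    rw [← add_div]
    exact (div_le_div_iff_of_pos_right (hK j hj i hi)).mpr (h j hj i hi)

end Aux3
section Aux4

set_option linter.unusedSectionVars false
set_option linter.unusedVariables false

open Filter

variable {M : Type*} [MetricSpace M] [AddCommSemigroup M] {κ : ℝ → ℝ} {p : ℝ}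
  {f g h : ℝ → ℝ → M}

variable (hκ : IsDistortion κ) (hp : 1 < p)
  (hd : ∀ u v w : M, dist (u + w) (v + w) = dist u v)

lemma kgap_pos (hκ : IsDistortion κ) {n : ℕ} {t : ℕ → ℝ} (ht : IsPartition n t) {i : ℕ}
    (hi : i < n) : 0 < κ (t (i+1) - t i) :=
  kappa_pos hκ (ht.gap_pos hi) (ht.gap_mem hi).2

include hκ hp hd

/-- joint 1-variation is bounded by the sum of individual ones -/
lemma kSum1J_le {n : ℕ} {t : ℕ → ℝ} (ht : IsPartition n t) :
    kSum1J κ p f g n t ≤ kSum1 κ p f n t + kSum1 κ p g n t := by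
  unfold kSum1J kSum1
  apply sum_bound1 hp
  · exact fun i hi => kgap_pos hκ ht (Finset.mem_range.mp hi)
  · exact fun i hi => dist_nonneg
  · exact fun i hi => dist_nonneg
  · exact fun i hi => dist_nonneg
  · intro i hi
    calc dist (f (t (i+1)) 0 + g (t i) 0) (f (t i) 0 + g (t (i+1)) 0)
        ≤ dist (f (t (i+1)) 0) (f (t i) 0) + dist (g (t i) 0) (g (t (i+1)) 0) := dist4 hd _ _ _ _
    _ = _ := by rw [dist_comm (g (t i) 0)]

lemma kSum2J_le {m : ℕ} {s : ℕ → ℝ} (hs : IsPartition m s) :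
    kSum2J κ p f g m s ≤ kSum2 κ p f m s + kSum2 κ p g m s := by
  unfold kSum2J kSum2
  apply sum_bound1 hp
  · exact fun j hj => kgap_pos hκ hs (Finset.mem_range.mp hj)
  · exact fun j hj => dist_nonneg
  · exact fun j hj => dist_nonneg
  · exact fun j hj => dist_nonneg
  · intro j hj
    calc dist (f 0 (s (j+1)) + g 0 (s j)) (f 0 (s j) + g 0 (s (j+1)))
        ≤ dist (f 0 (s (j+1))) (f 0 (s j)) + dist (g 0 (s j)) (g 0 (s (j+1))) := dist4 hd _ _ _ _
    _ = _ := by rw [dist_comm (g 0 (s j))]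

lemma kSum12J_le {n m : ℕ} {t s : ℕ → ℝ} (ht : IsPartition n t) (hs : IsPartition m s) :
    kSum12J κ p f g n t m s ≤ kSum12 κ p f n t m s + kSum12 κ p g n t m s := by
  unfold kSum12J kSum12
  apply sum_bound2 hp
  · exact fun j hj i hi => mul_pos (kgap_pos hκ ht (Finset.mem_range.mp hi))
      (kgap_pos hκ hs (Finset.mem_range.mp hj))
  · exact fun j hj i hi => dist_nonneg
  · exact fun j hj i hi => dist_nonneg
  · exact fun j hj i hi => dist_nonneg
  · intro j hj i hi
    have e1 : f (t (i+1)) (s (j+1)) + f (t i) (s j) + g (t (i+1)) (s j) + g (t i) (s (j+1))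
        = (f (t (i+1)) (s (j+1)) + f (t i) (s j)) + (g (t (i+1)) (s j) + g (t i) (s (j+1))) := by
      ac_rfl
    have e2 : g (t (i+1)) (s (j+1)) + g (t i) (s j) + f (t (i+1)) (s j) + f (t i) (s (j+1))
        = (f (t (i+1)) (s j) + f (t i) (s (j+1))) + (g (t (i+1)) (s (j+1)) + g (t i) (s j)) := by
      ac_rfl
    rw [e1, e2]
    calc dist _ _ ≤ dist (f (t (i+1)) (s (j+1)) + f (t i) (s j)) (f (t (i+1)) (s j) + f (t i) (s (j+1)))
          + dist (g (t (i+1)) (s j) + g (t i) (s (j+1))) (g (t (i+1)) (s (j+1)) + g (t i) (s j)) :=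
        dist4 hd _ _ _ _
    _ = _ + dist (g (t (i+1)) (s (j+1)) + g (t i) (s j)) (g (t (i+1)) (s j) + g (t i) (s (j+1))) := by
        rw [dist_comm (g (t (i+1)) (s j) + g (t i) (s (j+1)))]

/-- triangle inequality, 1-direction -/
lemma kSum1J_tri {n : ℕ} {t : ℕ → ℝ} (ht : IsPartition n t) :
    kSum1J κ p f g n t ≤ kSum1J κ p f h n t + kSum1J κ p h g n t := by
  unfold kSum1J
  apply sum_bound1 hp
  · exact fun i hi => kgap_pos hκ ht (Finset.mem_range.mp hi)
  · exact fun i hi => dist_nonneg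
  · exact fun i hi => dist_nonneg
  · exact fun i hi => dist_nonneg
  · intro i hi
    have := jtri hd (f (t (i+1)) 0) (f (t i) 0) (g (t (i+1)) 0) (g (t i) 0)
      (h (t (i+1)) 0) (h (t i) 0)
    calc dist (f (t (i+1)) 0 + g (t i) 0) (f (t i) 0 + g (t (i+1)) 0)
        = dist (f (t (i+1)) 0 + g (t i) 0) (g (t (i+1)) 0 + f (t i) 0) := by
          rw [add_comm (f (t i) 0)]
    _ ≤ dist (f (t (i+1)) 0 + h (t i) 0) (h (t (i+1)) 0 + f (t i) 0)
          + dist (h (t (i+1)) 0 + g (t i) 0) (g (t (i+1)) 0 + h (t i) 0) := this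
    _ = dist (f (t (i+1)) 0 + h (t i) 0) (f (t i) 0 + h (t (i+1)) 0)
          + dist (h (t (i+1)) 0 + g (t i) 0) (h (t i) 0 + g (t (i+1)) 0) := by
          rw [add_comm (h (t (i+1)) 0) (f (t i) 0), add_comm (g (t (i+1)) 0) (h (t i) 0)]

lemma kSum2J_tri {m : ℕ} {s : ℕ → ℝ} (hs : IsPartition m s) :
    kSum2J κ p f g m s ≤ kSum2J κ p f h m s + kSum2J κ p h g m s := by
  unfold kSum2J
  apply sum_bound1 hp
  · exact fun j hj => kgap_pos hκ hs (Finset.mem_range.mp hj)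
  · exact fun j hj => dist_nonneg
  · exact fun j hj => dist_nonneg
  · exact fun j hj => dist_nonneg
  · intro j hj
    have := jtri hd (f 0 (s (j+1))) (f 0 (s j)) (g 0 (s (j+1))) (g 0 (s j))
      (h 0 (s (j+1))) (h 0 (s j))
    calc dist (f 0 (s (j+1)) + g 0 (s j)) (f 0 (s j) + g 0 (s (j+1)))
        = dist (f 0 (s (j+1)) + g 0 (s j)) (g 0 (s (j+1)) + f 0 (s j)) := by
          rw [add_comm (f 0 (s j))]
    _ ≤ _ + _ := this
    _ = dist (f 0 (s (j+1)) + h 0 (s j)) (f 0 (s j) + h 0 (s (j+1)))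
          + dist (h 0 (s (j+1)) + g 0 (s j)) (h 0 (s j) + g 0 (s (j+1))) := by
          rw [add_comm (h 0 (s (j+1))) (f 0 (s j)), add_comm (g 0 (s (j+1))) (h 0 (s j))]

lemma kSum12J_tri {n m : ℕ} {t s : ℕ → ℝ} (ht : IsPartition n t) (hs : IsPartition m s) :
    kSum12J κ p f g n t m s ≤ kSum12J κ p f h n t m s + kSum12J κ p h g n t m s := by
  unfold kSum12J
  apply sum_bound2 hp
  · exact fun j hj i hi => mul_pos (kgap_pos hκ ht (Finset.mem_range.mp hi))
      (kgap_pos hκ hs (Finset.mem_range.mp hj))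
  · exact fun j hj i hi => dist_nonneg
  · exact fun j hj i hi => dist_nonneg
  · exact fun j hj i hi => dist_nonneg
  · intro j hj i hi
    set F := f (t (i+1)) (s (j+1)) + f (t i) (s j) with hF
    set F' := f (t (i+1)) (s j) + f (t i) (s (j+1)) with hF'
    set G := g (t (i+1)) (s (j+1)) + g (t i) (s j) with hG
    set G' := g (t (i+1)) (s j) + g (t i) (s (j+1)) with hG'
    set H := h (t (i+1)) (s (j+1)) + h (t i) (s j) with hH
    set H' := h (t (i+1)) (s j) + h (t i) (s (j+1)) with hH'
    have e1 : f (t (i+1)) (s (j+1)) + f (t i) (s j) + g (t (i+1)) (s j) + g (t i) (s (j+1))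
        = F + G' := by rw [hF, hG']; ac_rfl
    have e2 : g (t (i+1)) (s (j+1)) + g (t i) (s j) + f (t (i+1)) (s j) + f (t i) (s (j+1))
        = G + F' := by rw [hG, hF']; ac_rfl
    have e3 : f (t (i+1)) (s (j+1)) + f (t i) (s j) + h (t (i+1)) (s j) + h (t i) (s (j+1))
        = F + H' := by rw [hF, hH']; ac_rfl
    have e4 : h (t (i+1)) (s (j+1)) + h (t i) (s j) + f (t (i+1)) (s j) + f (t i) (s (j+1))
        = H + F' := by rw [hH, hF']; ac_rfl
    have e5 : h (t (i+1)) (s (j+1)) + h (t i) (s j) + g (t (i+1)) (s j) + g (t i) (s (j+1))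
        = H + G' := by rw [hH, hG']; ac_rfl
    have e6 : g (t (i+1)) (s (j+1)) + g (t i) (s j) + h (t (i+1)) (s j) + h (t i) (s (j+1))
        = G + H' := by rw [hG, hH']; ac_rfl
    rw [e1, e2, e3, e4, e5, e6]
    exact jtri hd F F' G G' H H'

/-- individual variation bounded via joint one -/
lemma kSum1_le {n : ℕ} {t : ℕ → ℝ} (ht : IsPartition n t) :
    kSum1 κ p f n t ≤ kSum1J κ p g f n t + kSum1 κ p g n t := by
  unfold kSum1J kSum1
  apply sum_bound1 hp
  · exact fun i hi => kgap_pos hκ ht (Finset.mem_range.mp hi)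
  · exact fun i hi => dist_nonneg
  · exact fun i hi => dist_nonneg
  · exact fun i hi => dist_nonneg
  · intro i hi
    have := jtri2 hd (f (t (i+1)) 0) (f (t i) 0) (g (t (i+1)) 0) (g (t i) 0)
    calc dist (f (t (i+1)) 0) (f (t i) 0)
        ≤ dist (f (t (i+1)) 0 + g (t i) 0) (g (t (i+1)) 0 + f (t i) 0)
            + dist (g (t (i+1)) 0) (g (t i) 0) := this
    _ = dist (g (t (i+1)) 0 + f (t i) 0) (g (t i) 0 + f (t (i+1)) 0)
            + dist (g (t (i+1)) 0) (g (t i) 0) := by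
          rw [dist_comm (f (t (i+1)) 0 + g (t i) 0), add_comm (f (t (i+1)) 0) (g (t i) 0)]

lemma kSum2_le {m : ℕ} {s : ℕ → ℝ} (hs : IsPartition m s) :
    kSum2 κ p f m s ≤ kSum2J κ p g f m s + kSum2 κ p g m s := by
  unfold kSum2J kSum2
  apply sum_bound1 hp
  · exact fun j hj => kgap_pos hκ hs (Finset.mem_range.mp hj)
  · exact fun j hj => dist_nonneg
  · exact fun j hj => dist_nonneg
  · exact fun j hj => dist_nonneg
  · intro j hj
    have := jtri2 hd (f 0 (s (j+1))) (f 0 (s j)) (g 0 (s (j+1))) (g 0 (s j))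
    calc dist (f 0 (s (j+1))) (f 0 (s j))
        ≤ dist (f 0 (s (j+1)) + g 0 (s j)) (g 0 (s (j+1)) + f 0 (s j))
            + dist (g 0 (s (j+1))) (g 0 (s j)) := this
    _ = dist (g 0 (s (j+1)) + f 0 (s j)) (g 0 (s j) + f 0 (s (j+1)))
            + dist (g 0 (s (j+1))) (g 0 (s j)) := by
          rw [dist_comm (f 0 (s (j+1)) + g 0 (s j)), add_comm (f 0 (s (j+1))) (g 0 (s j))]

lemma kSum12_le {n m : ℕ} {t s : ℕ → ℝ} (ht : IsPartition n t) (hs : IsPartition m s) :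
    kSum12 κ p f n t m s ≤ kSum12J κ p g f n t m s + kSum12 κ p g n t m s := by
  unfold kSum12J kSum12
  apply sum_bound2 hp
  · exact fun j hj i hi => mul_pos (kgap_pos hκ ht (Finset.mem_range.mp hi))
      (kgap_pos hκ hs (Finset.mem_range.mp hj))
  · exact fun j hj i hi => dist_nonneg
  · exact fun j hj i hi => dist_nonneg
  · exact fun j hj i hi => dist_nonneg
  · intro j hj i hi
    set F := f (t (i+1)) (s (j+1)) + f (t i) (s j) with hF
    set F' := f (t (i+1)) (s j) + f (t i) (s (j+1)) with hF'
    set G := g (t (i+1)) (s (j+1)) + g (t i) (s j) with hG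
    set G' := g (t (i+1)) (s j) + g (t i) (s (j+1)) with hG'
    have e1 : g (t (i+1)) (s (j+1)) + g (t i) (s j) + f (t (i+1)) (s j) + f (t i) (s (j+1))
        = G + F' := by rw [hG, hF']; ac_rfl
    have e2 : f (t (i+1)) (s (j+1)) + f (t i) (s j) + g (t (i+1)) (s j) + g (t i) (s (j+1))
        = F + G' := by rw [hF, hG']; ac_rfl
    rw [e1, e2]
    calc dist F F' ≤ dist (F + G') (G + F') + dist G G' := jtri2 hd F F' G G'
    _ = dist (G + F') (F + G') + dist G G' := by rw [dist_comm (F + G')]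

end Aux4
section Aux5

set_option linter.unusedSectionVars false
set_option linter.unusedVariables false

open Filter

variable {M : Type*} [MetricSpace M] [AddCommSemigroup M] {κ : ℝ → ℝ} {p : ℝ}
  {f g h : ℝ → ℝ → M}

variable (hκ : IsDistortion κ) (hp : 1 < p)
  (hd : ∀ u v w : M, dist (u + w) (v + w) = dist u v)

include hκ hp hd

lemma kSetJ_bddAbove (hf : MemKapBV κ p f) (hg : MemKapBV κ p g) :
    BddAbove (kSetJ κ p f g) := by
  refine ⟨sSup (kSet1 κ p f) + sSup (kSet1 κ p g) + (sSup (kSet2 κ p f) + sSup (kSet2 κ p g))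
    + (sSup (kSet12 κ p f) + sSup (kSet12 κ p g)), ?_⟩
  rintro x ⟨n, t, m, s, ht, hs, rfl⟩
  unfold VKapPart
  have h1 : kSum1J κ p f g n t ≤ sSup (kSet1 κ p f) + sSup (kSet1 κ p g) :=
    le_trans (kSum1J_le hκ hp hd ht) (add_le_add
      (le_csSup hf.1 ⟨n, t, ht, rfl⟩) (le_csSup hg.1 ⟨n, t, ht, rfl⟩))
  have h2 : kSum2J κ p f g m s ≤ sSup (kSet2 κ p f) + sSup (kSet2 κ p g) :=
    le_trans (kSum2J_le hκ hp hd hs) (add_le_add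
      (le_csSup hf.2.1 ⟨m, s, hs, rfl⟩) (le_csSup hg.2.1 ⟨m, s, hs, rfl⟩))
  have h3 : kSum12J κ p f g n t m s ≤ sSup (kSet12 κ p f) + sSup (kSet12 κ p g) :=
    le_trans (kSum12J_le hκ hp hd ht hs) (add_le_add
      (le_csSup hf.2.2 ⟨n, t, m, s, ht, hs, rfl⟩) (le_csSup hg.2.2 ⟨n, t, m, s, ht, hs, rfl⟩))
  linarith

lemma VKapPart_le_VKapJ (hf : MemKapBV κ p f) (hg : MemKapBV κ p g)
    {n m : ℕ} {t s : ℕ → ℝ} (ht : IsPartition n t) (hs : IsPartition m s) :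
    VKapPart κ p f g n t m s ≤ VKapJ κ p f g :=
  le_csSup (kSetJ_bddAbove hκ hp hd hf hg) ⟨n, t, m, s, ht, hs, rfl⟩

lemma VKapJ_nonneg (hf : MemKapBV κ p f) (hg : MemKapBV κ p g) :
    0 ≤ VKapJ κ p f g :=
  le_trans (VKapPart_nonneg hκ f g trivPartition trivPartition)
    (VKapPart_le_VKapJ hκ hp hd hf hg trivPartition trivPartition)

lemma VKapJ_tri (hf : MemKapBV κ p f) (hg : MemKapBV κ p g) (hh : MemKapBV κ p h) :
    VKapJ κ p f g ≤ VKapJ κ p f h + VKapJ κ p h g := by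
  apply csSup_le (kSetJ_nonempty f g)
  rintro x ⟨n, t, m, s, ht, hs, rfl⟩
  have key : VKapPart κ p f g n t m s ≤ VKapPart κ p f h n t m s + VKapPart κ p h g n t m s := by
    have := kSum1J_tri (h := h) hκ hp hd (f := f) (g := g) ht
    have := kSum2J_tri (h := h) hκ hp hd (f := f) (g := g) hs
    have := kSum12J_tri (h := h) hκ hp hd (f := f) (g := g) ht hs
    unfold VKapPart; linarith
  exact le_trans key (add_le_add
    (VKapPart_le_VKapJ hκ hp hd hf hh ht hs) (VKapPart_le_VKapJ hκ hp hd hh hg ht hs))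

omit hκ hp hd

lemma kSum1J_comm (hd : ∀ u v w : M, dist (u + w) (v + w) = dist u v) (n : ℕ) (t : ℕ → ℝ) :
    kSum1J κ p f g n t = kSum1J κ p g f n t := by
  unfold kSum1J
  congr 1
  apply Finset.sum_congr rfl
  intro i hi
  rw [dist_comm, add_comm (f (t i) 0), add_comm (f (t (i+1)) 0)]

lemma kSum2J_comm (hd : ∀ u v w : M, dist (u + w) (v + w) = dist u v) (m : ℕ) (s : ℕ → ℝ) :
    kSum2J κ p f g m s = kSum2J κ p g f m s := by
  unfold kSum2J
  congr 1
  apply Finset.sum_congr rfl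
  intro j hj
  rw [dist_comm, add_comm (f 0 (s j)), add_comm (f 0 (s (j+1)))]

lemma kSum12J_comm (n : ℕ) (t : ℕ → ℝ) (m : ℕ) (s : ℕ → ℝ) :
    kSum12J κ p f g n t m s = kSum12J κ p g f n t m s := by
  unfold kSum12J
  congr 1
  apply Finset.sum_congr rfl
  intro j hj
  apply Finset.sum_congr rfl
  intro i hi
  rw [dist_comm]

lemma VKapJ_comm (hd : ∀ u v w : M, dist (u + w) (v + w) = dist u v) :
    VKapJ κ p f g = VKapJ κ p g f := by
  unfold VKapJ
  congr 1
  ext x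
  constructor
  · rintro ⟨n, t, m, s, ht, hs, rfl⟩
    exact ⟨n, t, m, s, ht, hs, by
      unfold VKapPart
      rw [kSum1J_comm hd, kSum2J_comm hd, kSum12J_comm]⟩
  · rintro ⟨n, t, m, s, ht, hs, rfl⟩
    exact ⟨n, t, m, s, ht, hs, by
      unfold VKapPart
      rw [kSum1J_comm hd, kSum2J_comm hd, kSum12J_comm]⟩

end Aux5
section Aux6

set_option linter.unusedSectionVars false
set_option linter.unusedVariables false

open Filter

variable {M : Type*} [MetricSpace M] [AddCommSemigroup M] {κ : ℝ → ℝ} {p : ℝ}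
  {f g : ℝ → ℝ → M}

lemma exists_partition {x : ℝ} (hx : x ∈ Set.Ioc (0:ℝ) 1) :
    ∃ (n : ℕ) (t : ℕ → ℝ), IsPartition n t ∧ t 0 = 0 ∧ t 1 = x := by
  rcases eq_or_lt_of_le hx.2 with h1 | h1
  · exact ⟨1, fun i => (i : ℝ), trivPartition, by norm_num, by norm_num [h1]⟩
  · refine ⟨2, fun i => if i = 0 then 0 else if i = 1 then x else 1, ⟨by norm_num, by norm_num,
      by norm_num, ?_⟩, by norm_num, by norm_num⟩
    intro i hi
    interval_cases i <;> simp [hx.1, h1]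

variable (hκ : IsDistortion κ) (hp : 1 < p)
  (hd : ∀ u v w : M, dist (u + w) (v + w) = dist u v)

include hκ hp hd

lemma E1 (hf : MemKapBV κ p f) (hg : MemKapBV κ p g) {x : ℝ} (hx : x ∈ Set.Ioc (0:ℝ) 1) :
    dist (f x 0 + g 0 0) (f 0 0 + g x 0) ≤ (VKapJ κ p f g) ^ p := by
  obtain ⟨n, t, ht, ht0, ht1⟩ := exists_partition hx
  have hgap : t 1 - t 0 = x := by rw [ht0, ht1, sub_zero]
  have hterm : ∀ i ∈ Finset.range n,
      0 ≤ dist (f (t (i+1)) 0 + g (t i) 0) (f (t i) 0 + g (t (i+1)) 0) / κ (t (i+1) - t i) :=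
    fun i hi => div_nonneg dist_nonneg (kappa_nonneg hκ (ht.gap_mem (Finset.mem_range.mp hi)))
  have hSnn : 0 ≤ ∑ i ∈ Finset.range n,
      dist (f (t (i+1)) 0 + g (t i) 0) (f (t i) 0 + g (t (i+1)) 0) / κ (t (i+1) - t i) :=
    Finset.sum_nonneg hterm
  have hk0 : 0 < κ (t 1 - t 0) := kgap_pos hκ ht ht.1
  have hk1 : κ (t 1 - t 0) ≤ 1 := kappa_le_one hκ (ht.gap_mem ht.1)
  rw [hgap] at hk0 hk1
  have h2 : dist (f (t 1) 0 + g (t 0) 0) (f (t 0) 0 + g (t 1) 0) / κ (t 1 - t 0) ≤ ∑ i ∈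
      Finset.range n, dist (f (t (i+1)) 0 + g (t i) 0) (f (t i) 0 + g (t (i+1)) 0)
        / κ (t (i+1) - t i) :=
    Finset.single_le_sum hterm (Finset.mem_range.mpr ht.1)
  rw [hgap, ht0, ht1] at h2
  have h3 : (∑ i ∈ Finset.range n,
      dist (f (t (i+1)) 0 + g (t i) 0) (f (t i) 0 + g (t (i+1)) 0) / κ (t (i+1) - t i))
      = (kSum1J κ p f g n t) ^ p := by
    rw [kSum1J, rpow_inv_p hp hSnn]
  have h4 : kSum1J κ p f g n t ≤ VKapJ κ p f g := by
    have h5 : kSum1J κ p f g n t ≤ VKapPart κ p f g n t 1 (fun i => (i:ℝ)) := by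
      have := kSum2J_nonneg (p := p) (M := M) hκ f g trivPartition
      have := kSum12J_nonneg (p := p) (M := M) hκ f g ht trivPartition
      unfold VKapPart; linarith
    exact le_trans h5 (VKapPart_le_VKapJ hκ hp hd hf hg ht trivPartition)
  calc dist (f x 0 + g 0 0) (f 0 0 + g x 0)
      ≤ dist (f x 0 + g 0 0) (f 0 0 + g x 0) / κ x := by
        rw [le_div_iff₀ hk0]
        exact mul_le_of_le_one_right dist_nonneg hk1
  _ ≤ _ := h2
  _ = (kSum1J κ p f g n t) ^ p := h3
  _ ≤ (VKapJ κ p f g) ^ p :=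
      Real.rpow_le_rpow (kSum1J_nonneg hκ f g ht) h4 (by linarith)

lemma E2 (hf : MemKapBV κ p f) (hg : MemKapBV κ p g) {y : ℝ} (hy : y ∈ Set.Ioc (0:ℝ) 1) :
    dist (f 0 y + g 0 0) (f 0 0 + g 0 y) ≤ (VKapJ κ p f g) ^ p := by
  obtain ⟨m, s, hs, hs0, hs1⟩ := exists_partition hy
  have hgap : s 1 - s 0 = y := by rw [hs0, hs1, sub_zero]
  have hterm : ∀ j ∈ Finset.range m,
      0 ≤ dist (f 0 (s (j+1)) + g 0 (s j)) (f 0 (s j) + g 0 (s (j+1))) / κ (s (j+1) - s j) :=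
    fun j hj => div_nonneg dist_nonneg (kappa_nonneg hκ (hs.gap_mem (Finset.mem_range.mp hj)))
  have hSnn : 0 ≤ ∑ j ∈ Finset.range m,
      dist (f 0 (s (j+1)) + g 0 (s j)) (f 0 (s j) + g 0 (s (j+1))) / κ (s (j+1) - s j) :=
    Finset.sum_nonneg hterm
  have hk0 : 0 < κ (s 1 - s 0) := kgap_pos hκ hs hs.1
  have hk1 : κ (s 1 - s 0) ≤ 1 := kappa_le_one hκ (hs.gap_mem hs.1)
  rw [hgap] at hk0 hk1
  have h2 : dist (f 0 (s 1) + g 0 (s 0)) (f 0 (s 0) + g 0 (s 1)) / κ (s 1 - s 0) ≤ ∑ j ∈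
      Finset.range m, dist (f 0 (s (j+1)) + g 0 (s j)) (f 0 (s j) + g 0 (s (j+1)))
        / κ (s (j+1) - s j) :=
    Finset.single_le_sum hterm (Finset.mem_range.mpr hs.1)
  rw [hgap, hs0, hs1] at h2
  have h3 : (∑ j ∈ Finset.range m,
      dist (f 0 (s (j+1)) + g 0 (s j)) (f 0 (s j) + g 0 (s (j+1))) / κ (s (j+1) - s j))
      = (kSum2J κ p f g m s) ^ p := by
    rw [kSum2J, rpow_inv_p hp hSnn]
  have h4 : kSum2J κ p f g m s ≤ VKapJ κ p f g := by
    have h5 : kSum2J κ p f g m s ≤ VKapPart κ p f g 1 (fun i => (i:ℝ)) m s := by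
      have := kSum1J_nonneg (p := p) (M := M) hκ f g trivPartition
      have := kSum12J_nonneg (p := p) (M := M) hκ f g trivPartition hs
      unfold VKapPart; linarith
    exact le_trans h5 (VKapPart_le_VKapJ hκ hp hd hf hg trivPartition hs)
  calc dist (f 0 y + g 0 0) (f 0 0 + g 0 y)
      ≤ dist (f 0 y + g 0 0) (f 0 0 + g 0 y) / κ y := by
        rw [le_div_iff₀ hk0]
        exact mul_le_of_le_one_right dist_nonneg hk1
  _ ≤ _ := h2
  _ = (kSum2J κ p f g m s) ^ p := h3
  _ ≤ (VKapJ κ p f g) ^ p :=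
      Real.rpow_le_rpow (kSum2J_nonneg hκ f g hs) h4 (by linarith)

lemma E12 (hf : MemKapBV κ p f) (hg : MemKapBV κ p g) {x y : ℝ}
    (hx : x ∈ Set.Ioc (0:ℝ) 1) (hy : y ∈ Set.Ioc (0:ℝ) 1) :
    dist (f x y + f 0 0 + g x 0 + g 0 y) (g x y + g 0 0 + f x 0 + f 0 y)
      ≤ (VKapJ κ p f g) ^ p := by
  obtain ⟨n, t, ht, ht0, ht1⟩ := exists_partition hx
  obtain ⟨m, s, hs, hs0, hs1⟩ := exists_partition hy
  have hgt : t 1 - t 0 = x := by rw [ht0, ht1, sub_zero]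
  have hgs : s 1 - s 0 = y := by rw [hs0, hs1, sub_zero]
  set T : ℕ → ℕ → ℝ := fun i j =>
      dist (f (t (i+1)) (s (j+1)) + f (t i) (s j) + g (t (i+1)) (s j) + g (t i) (s (j+1)))
           (g (t (i+1)) (s (j+1)) + g (t i) (s j) + f (t (i+1)) (s j) + f (t i) (s (j+1)))
        / (κ (t (i+1) - t i) * κ (s (j+1) - s j)) with hT
  have hterm : ∀ i ∈ Finset.range n, ∀ j ∈ Finset.range m, 0 ≤ T i j := fun i hi j hj =>
    div_nonneg dist_nonneg (mul_nonneg
      (kappa_nonneg hκ (ht.gap_mem (Finset.mem_range.mp hi)))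
      (kappa_nonneg hκ (hs.gap_mem (Finset.mem_range.mp hj))))
  have hSnn : 0 ≤ ∑ j ∈ Finset.range m, ∑ i ∈ Finset.range n, T i j :=
    Finset.sum_nonneg fun j hj => Finset.sum_nonneg fun i hi => hterm i hi j hj
  have hkt : 0 < κ (t 1 - t 0) := kgap_pos hκ ht ht.1
  have hks : 0 < κ (s 1 - s 0) := kgap_pos hκ hs hs.1
  have hkt1 : κ (t 1 - t 0) ≤ 1 := kappa_le_one hκ (ht.gap_mem ht.1)
  have hks1 : κ (s 1 - s 0) ≤ 1 := kappa_le_one hκ (hs.gap_mem hs.1)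
  rw [hgt] at hkt hkt1
  rw [hgs] at hks hks1
  have hT00 : T 0 0 = dist (f x y + f 0 0 + g x 0 + g 0 y)
      (g x y + g 0 0 + f x 0 + f 0 y) / (κ x * κ y) := by
    rw [hT]
    simp only [Nat.zero_add, ht0, ht1, hs0, hs1, sub_zero]
  have h1 : dist (f x y + f 0 0 + g x 0 + g 0 y) (g x y + g 0 0 + f x 0 + f 0 y) ≤ T 0 0 := by
    rw [hT00, le_div_iff₀ (mul_pos hkt hks)]
    exact mul_le_of_le_one_right dist_nonneg
      (mul_le_one₀ hkt1 hks.le hks1)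
  have h2 : T 0 0 ≤ ∑ j ∈ Finset.range m, ∑ i ∈ Finset.range n, T i j :=
    le_trans
      (Finset.single_le_sum (fun i hi => hterm i hi 0 (Finset.mem_range.mpr hs.1))
        (Finset.mem_range.mpr ht.1))
      (Finset.single_le_sum
        (fun j hj => Finset.sum_nonneg fun i hi => hterm i hi j hj)
        (Finset.mem_range.mpr hs.1))
  have hk : kSum12J κ p f g n t m s
      = (∑ j ∈ Finset.range m, ∑ i ∈ Finset.range n, T i j) ^ (1/p) := by
    rw [kSum12J]
  have h3 : (∑ j ∈ Finset.range m, ∑ i ∈ Finset.range n, T i j)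
      = (kSum12J κ p f g n t m s) ^ p := by
    rw [hk, rpow_inv_p hp hSnn]
  have h4 : kSum12J κ p f g n t m s ≤ VKapJ κ p f g := by
    have h5 : kSum12J κ p f g n t m s ≤ VKapPart κ p f g n t m s := by
      have := kSum1J_nonneg (p := p) (M := M) hκ f g ht
      have := kSum2J_nonneg (p := p) (M := M) hκ f g hs
      unfold VKapPart; linarith
    exact le_trans h5 (VKapPart_le_VKapJ hκ hp hd hf hg ht hs)
  calc dist (f x y + f 0 0 + g x 0 + g 0 y) (g x y + g 0 0 + f x 0 + f 0 y)
      ≤ T 0 0 := h1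
  _ ≤ ∑ j ∈ Finset.range m, ∑ i ∈ Finset.range n, T i j := h2
  _ = (kSum12J κ p f g n t m s) ^ p := h3
  _ ≤ (VKapJ κ p f g) ^ p :=
      Real.rpow_le_rpow (kSum12J_nonneg hκ f g ht hs) h4 (by linarith)

end Aux6
section Aux7

set_option linter.unusedSectionVars false
set_option linter.unusedVariables false

open Filter

variable {M : Type*} [MetricSpace M] [AddCommSemigroup M] {κ : ℝ → ℝ} {p : ℝ}
  {f g : ℝ → ℝ → M}

lemma dist_pt (hd : ∀ u v w : M, dist (u + w) (v + w) = dist u v)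
    (u v u0 v0 u1 v1 u2 v2 : M) :
    dist u v ≤ dist u0 v0 + dist (u1 + v0) (u0 + v1) + dist (u2 + v0) (u0 + v2)
      + dist (u + u0 + v1 + v2) (v + v0 + u1 + u2) := by
  have h1 : dist u v = dist (u + u0 + v1 + v2) (v + (u0 + v1 + v2)) := by
    rw [show u + u0 + v1 + v2 = u + (u0 + v1 + v2) by ac_rfl, hd u v (u0 + v1 + v2)]
  have h2 : dist (u + u0 + v1 + v2) (v + (u0 + v1 + v2))
      ≤ dist (u + u0 + v1 + v2) (v + v0 + u1 + u2)
        + dist (v + v0 + u1 + u2) (v + (u0 + v1 + v2)) := dist_triangle _ _ _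
  have h3 : dist (v + v0 + u1 + u2) (v + (u0 + v1 + v2))
      = dist (v0 + u1 + u2) (u0 + v1 + v2) := by
    rw [show v + v0 + u1 + u2 = (v0 + u1 + u2) + v by ac_rfl,
        show v + (u0 + v1 + v2) = (u0 + v1 + v2) + v by ac_rfl, hd]
  have h4 : dist (v0 + u1 + u2) (u0 + v1 + v2)
      = dist ((u1 + v0) + (u2 + v0)) ((u0 + v1) + (v2 + v0)) := by
    rw [show (u1 + v0) + (u2 + v0) = (v0 + u1 + u2) + v0 by ac_rfl,
        show (u0 + v1) + (v2 + v0) = (u0 + v1 + v2) + v0 by ac_rfl, hd]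
  have h5 : dist ((u1 + v0) + (u2 + v0)) ((u0 + v1) + (v2 + v0))
      ≤ dist (u1 + v0) (u0 + v1) + dist (u2 + v0) (v2 + v0) := dist4 hd _ _ _ _
  have h6 : dist (u2 + v0) (v2 + v0) ≤ dist (u2 + v0) (u0 + v2) + dist (u0 + v2) (v2 + v0) :=
    dist_triangle _ _ _
  have h7 : dist (u0 + v2) (v2 + v0) = dist u0 v0 := by
    rw [show v2 + v0 = v0 + v2 by ac_rfl, hd]
  linarith

variable (hκ : IsDistortion κ) (hp : 1 < p)
  (hd : ∀ u v w : M, dist (u + w) (v + w) = dist u v)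

include hκ hp hd

/-- main pointwise bound -/
lemma dist_le_rho (hf : MemKapBV κ p f) (hg : MemKapBV κ p g) {x y : ℝ}
    (hx : x ∈ Set.Icc (0:ℝ) 1) (hy : y ∈ Set.Icc (0:ℝ) 1) :
    dist (f x y) (g x y) ≤ dist (f 0 0) (g 0 0) + 3 * (VKapJ κ p f g) ^ p := by
  have hVp : 0 ≤ (VKapJ κ p f g) ^ p := Real.rpow_nonneg (VKapJ_nonneg hκ hp hd hf hg) p
  have b1 : dist (f x 0 + g 0 0) (f 0 0 + g x 0) ≤ (VKapJ κ p f g) ^ p := by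
    rcases eq_or_lt_of_le hx.1 with h | h
    · rw [← h]
      simpa [dist_comm] using hVp
    · exact E1 hκ hp hd hf hg ⟨h, hx.2⟩
  have b2 : dist (f 0 y + g 0 0) (f 0 0 + g 0 y) ≤ (VKapJ κ p f g) ^ p := by
    rcases eq_or_lt_of_le hy.1 with h | h
    · rw [← h]
      simpa [dist_comm] using hVp
    · exact E2 hκ hp hd hf hg ⟨h, hy.2⟩
  have b12 : dist (f x y + f 0 0 + g x 0 + g 0 y) (g x y + g 0 0 + f x 0 + f 0 y)
      ≤ (VKapJ κ p f g) ^ p := by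
    rcases eq_or_lt_of_le hx.1 with h | h
    · rw [← h]
      have e : f 0 y + f 0 0 + g 0 0 + g 0 y = g 0 y + g 0 0 + f 0 0 + f 0 y := by ac_rfl
      rw [e, dist_self]
      exact hVp
    · rcases eq_or_lt_of_le hy.1 with h' | h'
      · rw [← h']
        have e : f x 0 + f 0 0 + g x 0 + g 0 0 = g x 0 + g 0 0 + f x 0 + f 0 0 := by ac_rfl
        rw [e, dist_self]
        exact hVp
      · exact E12 hκ hp hd hf hg ⟨h, hx.2⟩ ⟨h', hy.2⟩
  have key := dist_pt hd (f x y) (g x y) (f 0 0) (g 0 0) (f x 0) (g x 0) (f 0 y) (g 0 y)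
  linarith

end Aux7
section Aux8

set_option linter.unusedSectionVars false
set_option linter.unusedVariables false

open Filter

variable {M : Type*} [MetricSpace M] [AddCommSemigroup M] {κ : ℝ → ℝ} {p : ℝ}
  {f g : ℝ → ℝ → M}

lemma tendsto_add_M (hd : ∀ u v w : M, dist (u + w) (v + w) = dist u v)
    {A B : ℕ → M} {a b : M} (hA : Tendsto A atTop (nhds a)) (hB : Tendsto B atTop (nhds b)) :
    Tendsto (fun v => A v + B v) atTop (nhds (a + b)) := by
  rw [tendsto_iff_dist_tendsto_zero] at hA hB ⊢
  apply squeeze_zero (fun v => dist_nonneg) (fun v => dist4 hd (A v) a (B v) b)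
  simpa using hA.add hB

variable (hκ : IsDistortion κ) (hp : 1 < p)
  (hd : ∀ u v w : M, dist (u + w) (v + w) = dist u v)

lemma zero_mem_Icc : (0:ℝ) ∈ Set.Icc (0:ℝ) 1 := ⟨le_refl 0, zero_le_one⟩

include hκ hp hd

lemma tendsto_VKapPart {G : ℕ → ℝ → ℝ → M}
    (h : ∀ x ∈ Set.Icc (0:ℝ) 1, ∀ y ∈ Set.Icc (0:ℝ) 1,
      Tendsto (fun v => G v x y) atTop (nhds (g x y)))
    {n m : ℕ} {t s : ℕ → ℝ} (ht : IsPartition n t) (hs : IsPartition m s) :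
    Tendsto (fun v => VKapPart κ p f (G v) n t m s) atTop
      (nhds (VKapPart κ p f g n t m s)) := by
  have hmem : ∀ i ≤ n, t i ∈ Set.Icc (0:ℝ) 1 := fun i hi => ht.mem hi
  have hmem' : ∀ j ≤ m, s j ∈ Set.Icc (0:ℝ) 1 := fun j hj => hs.mem hj
  have hexp : (0:ℝ) < 1 / p := by positivity
  unfold VKapPart
  have T1 : Tendsto (fun v => kSum1J κ p f (G v) n t) atTop (nhds (kSum1J κ p f g n t)) := by
    unfold kSum1J
    apply Tendsto.rpow_const _ (Or.inr hexp.le)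
    apply tendsto_finset_sum
    intro i hi
    have hi' := Finset.mem_range.mp hi
    exact Tendsto.div_const
      (Tendsto.dist
        (tendsto_add_M hd tendsto_const_nhds (h (t i) (hmem i (by omega)) 0 zero_mem_Icc))
        (tendsto_add_M hd tendsto_const_nhds (h (t (i+1)) (hmem (i+1) (by omega)) 0 zero_mem_Icc))) _
  have T2 : Tendsto (fun v => kSum2J κ p f (G v) m s) atTop (nhds (kSum2J κ p f g m s)) := by
    unfold kSum2J
    apply Tendsto.rpow_const _ (Or.inr hexp.le)
    apply tendsto_finset_sum
    intro j hj
    have hj' := Finset.mem_range.mp hj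
    exact Tendsto.div_const
      (Tendsto.dist
        (tendsto_add_M hd tendsto_const_nhds (h 0 zero_mem_Icc (s j) (hmem' j (by omega))))
        (tendsto_add_M hd tendsto_const_nhds (h 0 zero_mem_Icc (s (j+1)) (hmem' (j+1) (by omega))))) _
  have T12 : Tendsto (fun v => kSum12J κ p f (G v) n t m s) atTop
      (nhds (kSum12J κ p f g n t m s)) := by
    unfold kSum12J
    apply Tendsto.rpow_const _ (Or.inr hexp.le)
    apply tendsto_finset_sum
    intro j hj
    have hj' := Finset.mem_range.mp hj
    apply tendsto_finset_sum
    intro i hi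
    have hi' := Finset.mem_range.mp hi
    refine Tendsto.div_const (Tendsto.dist ?_ ?_) _
    · exact tendsto_add_M hd
        (tendsto_add_M hd
          (tendsto_add_M hd tendsto_const_nhds tendsto_const_nhds)
          (h (t (i+1)) (hmem (i+1) (by omega)) (s j) (hmem' j (by omega))))
        (h (t i) (hmem i (by omega)) (s (j+1)) (hmem' (j+1) (by omega)))
    · exact tendsto_add_M hd
        (tendsto_add_M hd
          (tendsto_add_M hd
            (h (t (i+1)) (hmem (i+1) (by omega)) (s (j+1)) (hmem' (j+1) (by omega)))
            (h (t i) (hmem i (by omega)) (s j) (hmem' j (by omega))))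
          tendsto_const_nhds)
        tendsto_const_nhds
  exact (T1.add T2).add T12

end Aux8
theorem KapBV_complete_metric [CompleteSpace M] (κ : ℝ → ℝ) (hκ : IsDistortion κ)
    (p : ℝ) (hp : 1 < p)
    (hd : ∀ u v w : M, dist (u + w) (v + w) = dist u v) :
    (∀ f g : ℝ → ℝ → M, MemKapBV κ p f → MemKapBV κ p g →
      (rhoKap κ p f g = 0 ↔
        ∀ t ∈ Set.Icc (0:ℝ) 1, ∀ s ∈ Set.Icc (0:ℝ) 1, f t s = g t s))
    ∧ (∀ f g : ℝ → ℝ → M, MemKapBV κ p f → MemKapBV κ p g →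
        rhoKap κ p f g = rhoKap κ p g f)
    ∧ (∀ f g h : ℝ → ℝ → M, MemKapBV κ p f → MemKapBV κ p g → MemKapBV κ p h →
        rhoKap κ p f g ≤ rhoKap κ p f h + rhoKap κ p h g)
    ∧ (∀ F : ℕ → ℝ → ℝ → M, (∀ u, MemKapBV κ p (F u)) →
        (∀ ε > (0:ℝ), ∃ N, ∀ u ≥ N, ∀ v ≥ N, rhoKap κ p (F u) (F v) < ε) →
        ∃ f : ℝ → ℝ → M, MemKapBV κ p f ∧
          Filter.Tendsto (fun u => rhoKap κ p (F u) f) Filter.atTop (nhds 0)) := by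
  classical
  have hp0 : (0:ℝ) < p := by linarith
  have hexp0 : (1:ℝ)/p ≠ 0 := by positivity
  refine ⟨?_, ?_, ?_, ?_⟩
  · -- zero iff equal on square
    intro f g hf hg
    constructor
    · intro h0 x hx y hy
      have hVnn := VKapJ_nonneg hκ hp hd hf hg
      have hdnn : 0 ≤ dist (f 0 0) (g 0 0) := dist_nonneg
      have hrho : rhoKap κ p f g = dist (f 0 0) (g 0 0) + VKapJ κ p f g := rfl
      rw [hrho] at h0
      have hd00 : dist (f 0 0) (g 0 0) = 0 := by linarith
      have hV0 : VKapJ κ p f g = 0 := by linarith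
      have := dist_le_rho hκ hp hd hf hg hx hy
      rw [hd00, hV0, Real.zero_rpow (by linarith : p ≠ 0)] at this
      exact dist_le_zero.mp (by linarith)
    · intro heq
      have hd00 : dist (f 0 0) (g 0 0) = 0 := by
        rw [heq 0 zero_mem_Icc 0 zero_mem_Icc, dist_self]
      have hV0 : VKapJ κ p f g = 0 := by
        have hall : ∀ x ∈ kSetJ κ p f g, x = 0 := by
          rintro x ⟨n, t, m, s, ht, hs, rfl⟩
          have h1 : kSum1J κ p f g n t = 0 := by
            rw [kSum1J, Finset.sum_eq_zero, Real.zero_rpow hexp0]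
            intro i hi
            have hi' := Finset.mem_range.mp hi
            rw [heq (t (i+1)) (ht.mem (by omega)) 0 zero_mem_Icc,
                heq (t i) (ht.mem (by omega)) 0 zero_mem_Icc,
                show g (t (i+1)) 0 + g (t i) 0 = g (t i) 0 + g (t (i+1)) 0 by ac_rfl,
                dist_self, zero_div]
          have h2 : kSum2J κ p f g m s = 0 := by
            rw [kSum2J, Finset.sum_eq_zero, Real.zero_rpow hexp0]
            intro j hj
            have hj' := Finset.mem_range.mp hj
            rw [heq 0 zero_mem_Icc (s (j+1)) (hs.mem (by omega)),
                heq 0 zero_mem_Icc (s j) (hs.mem (by omega)),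
                show g 0 (s (j+1)) + g 0 (s j) = g 0 (s j) + g 0 (s (j+1)) by ac_rfl,
                dist_self, zero_div]
          have h3 : kSum12J κ p f g n t m s = 0 := by
            rw [kSum12J, Finset.sum_eq_zero, Real.zero_rpow hexp0]
            intro j hj
            have hj' := Finset.mem_range.mp hj
            apply Finset.sum_eq_zero
            intro i hi
            have hi' := Finset.mem_range.mp hi
            rw [heq (t (i+1)) (ht.mem (by omega)) (s (j+1)) (hs.mem (by omega)),
                heq (t i) (ht.mem (by omega)) (s j) (hs.mem (by omega)),
                heq (t (i+1)) (ht.mem (by omega)) (s j) (hs.mem (by omega)),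
                heq (t i) (ht.mem (by omega)) (s (j+1)) (hs.mem (by omega)),
                dist_self, zero_div]
          unfold VKapPart
          rw [h1, h2, h3]
          norm_num
        have hone : kSetJ κ p f g = {0} := by
          apply Set.eq_singleton_iff_nonempty_unique_mem.mpr
          exact ⟨kSetJ_nonempty f g, hall⟩
        rw [VKapJ, hone, csSup_singleton]
      show dist (f 0 0) (g 0 0) + VKapJ κ p f g = 0
      rw [hd00, hV0, add_zero]
  · -- symmetry
    intro f g hf hg
    show dist (f 0 0) (g 0 0) + VKapJ κ p f g = dist (g 0 0) (f 0 0) + VKapJ κ p g f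
    rw [dist_comm, VKapJ_comm hd]
  · -- triangle
    intro f g h hf hg hh
    have h1 := dist_triangle (f 0 0) (h 0 0) (g 0 0)
    have h2 := VKapJ_tri hκ hp hd hf hg hh
    show dist (f 0 0) (g 0 0) + VKapJ κ p f g ≤
      (dist (f 0 0) (h 0 0) + VKapJ κ p f h) + (dist (h 0 0) (g 0 0) + VKapJ κ p h g)
    linarith
  · -- completeness
    intro F hF hC
    have hrho_eq : ∀ u v, rhoKap κ p (F u) (F v)
        = dist (F u 0 0) (F v 0 0) + VKapJ κ p (F u) (F v) := fun u v => rfl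
    have hVnn : ∀ u v, 0 ≤ VKapJ κ p (F u) (F v) :=
      fun u v => VKapJ_nonneg hκ hp hd (hF u) (hF v)
    have hrnn : ∀ u v, 0 ≤ rhoKap κ p (F u) (F v) := fun u v => by
      rw [hrho_eq]; have := hVnn u v; have : (0:ℝ) ≤ dist (F u 0 0) (F v 0 0) := dist_nonneg
      linarith [hVnn u v]
    -- pointwise bound
    have hpt : ∀ x ∈ Set.Icc (0:ℝ) 1, ∀ y ∈ Set.Icc (0:ℝ) 1, ∀ u v,
        rhoKap κ p (F u) (F v) ≤ 1 →
        dist (F u x y) (F v x y) ≤ 4 * rhoKap κ p (F u) (F v) := by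
      intro x hx y hy u v hle1
      have h1 := dist_le_rho hκ hp hd (hF u) (hF v) hx hy
      have hVr : VKapJ κ p (F u) (F v) ≤ rhoKap κ p (F u) (F v) := by
        rw [hrho_eq]; linarith [dist_nonneg (x := F u 0 0) (y := F v 0 0)]
      have hV1 : VKapJ κ p (F u) (F v) ≤ 1 := le_trans hVr hle1
      have hVp : (VKapJ κ p (F u) (F v)) ^ p ≤ VKapJ κ p (F u) (F v) :=
        pow_small hp (hVnn u v) hV1
      have hdr : dist (F u 0 0) (F v 0 0) ≤ rhoKap κ p (F u) (F v) := by
        rw [hrho_eq]; linarith [hVnn u v]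
      linarith
    -- pointwise Cauchy
    have hcauchy : ∀ x ∈ Set.Icc (0:ℝ) 1, ∀ y ∈ Set.Icc (0:ℝ) 1,
        ∃ l : M, Filter.Tendsto (fun u => F u x y) Filter.atTop (nhds l) := by
      intro x hx y hy
      apply cauchySeq_tendsto_of_complete
      rw [Metric.cauchySeq_iff]
      intro ε hε
      obtain ⟨N, hN⟩ := hC (min 1 (ε/5)) (by positivity)
      refine ⟨N, fun u hu v hv => ?_⟩
      have h1 := hN u hu v hv
      have h2 := hpt x hx y hy u v (le_of_lt (lt_of_lt_of_le h1 (min_le_left _ _)))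
      have h3 : rhoKap κ p (F u) (F v) < ε/5 := lt_of_lt_of_le h1 (min_le_right _ _)
      linarith
    have hne : Nonempty M := ⟨F 0 0 0⟩
    choose! f hlim using hcauchy
    -- per-partition limit bound
    have hpartbound : ∀ ε > (0:ℝ), ∃ N, ∀ u ≥ N,
        (∀ n t m s, IsPartition n t → IsPartition m s →
          VKapPart κ p (F u) f n t m s ≤ ε) ∧ dist (F u 0 0) (f 0 0) ≤ ε := by
      intro ε hε
      obtain ⟨N, hN⟩ := hC ε hε
      refine ⟨N, fun u hu => ⟨?_, ?_⟩⟩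
      · intro n t m s ht hs
        apply le_of_tendsto (tendsto_VKapPart hκ hp hd hlim ht hs)
        filter_upwards [Filter.eventually_ge_atTop N] with v hv
        have e1 : VKapPart κ p (F u) (F v) n t m s ≤ VKapJ κ p (F u) (F v) :=
          VKapPart_le_VKapJ hκ hp hd (hF u) (hF v) ht hs
        have e2 : VKapJ κ p (F u) (F v) ≤ rhoKap κ p (F u) (F v) := by
          rw [hrho_eq]
          linarith [dist_nonneg (x := F u 0 0) (y := F v 0 0)]
        linarith [(hN u hu v hv).le]
      · apply le_of_tendsto (Filter.Tendsto.dist tendsto_const_nhds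
          (hlim 0 zero_mem_Icc 0 zero_mem_Icc))
        filter_upwards [Filter.eventually_ge_atTop N] with v hv
        have e1 : dist (F u 0 0) (F v 0 0) ≤ rhoKap κ p (F u) (F v) := by
          rw [hrho_eq]
          linarith [hVnn u v]
        linarith [(hN u hu v hv).le]
    refine ⟨f, ?_, ?_⟩
    · -- MemKapBV f
      obtain ⟨N, hN⟩ := hpartbound 1 one_pos
      have hB := hN N le_rfl
      refine ⟨⟨1 + sSup (kSet1 κ p (F N)), ?_⟩, ⟨1 + sSup (kSet2 κ p (F N)), ?_⟩,
        ⟨1 + sSup (kSet12 κ p (F N)), ?_⟩⟩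
      · rintro x ⟨n, t, ht, rfl⟩
        have h1 := kSum1_le (f := f) (g := F N) hκ hp hd ht
        have h2 : kSum1J κ p (F N) f n t ≤ 1 := by
          have h3 := hB.1 n t 1 (fun i => (i:ℝ)) ht trivPartition
          have h4 := kSum2J_nonneg (p := p) hκ (F N) f (trivPartition)
          have h5 := kSum12J_nonneg (p := p) hκ (F N) f ht (trivPartition)
          unfold VKapPart at h3
          linarith
        have h6 : kSum1 κ p (F N) n t ≤ sSup (kSet1 κ p (F N)) :=
          le_csSup (hF N).1 ⟨n, t, ht, rfl⟩
        linarith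
      · rintro x ⟨m, s, hs, rfl⟩
        have h1 := kSum2_le (f := f) (g := F N) hκ hp hd hs
        have h2 : kSum2J κ p (F N) f m s ≤ 1 := by
          have h3 := hB.1 1 (fun i => (i:ℝ)) m s trivPartition hs
          have h4 := kSum1J_nonneg (p := p) hκ (F N) f (trivPartition)
          have h5 := kSum12J_nonneg (p := p) hκ (F N) f (trivPartition) hs
          unfold VKapPart at h3
          linarith
        have h6 : kSum2 κ p (F N) m s ≤ sSup (kSet2 κ p (F N)) :=
          le_csSup (hF N).2.1 ⟨m, s, hs, rfl⟩
        linarith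
      · rintro x ⟨n, t, m, s, ht, hs, rfl⟩
        have h1 := kSum12_le (f := f) (g := F N) hκ hp hd ht hs
        have h2 : kSum12J κ p (F N) f n t m s ≤ 1 := by
          have h3 := hB.1 n t m s ht hs
          have h4 := kSum1J_nonneg (p := p) hκ (F N) f ht
          have h5 := kSum2J_nonneg (p := p) hκ (F N) f hs
          unfold VKapPart at h3
          linarith
        have h6 : kSum12 κ p (F N) n t m s ≤ sSup (kSet12 κ p (F N)) :=
          le_csSup (hF N).2.2 ⟨n, t, m, s, ht, hs, rfl⟩
        linarith
    · -- Tendsto rho -> 0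
      rw [Metric.tendsto_atTop]
      intro ε hε
      obtain ⟨N, hN⟩ := hpartbound (ε/3) (by linarith)
      refine ⟨N, fun u hu => ?_⟩
      have h1 := (hN u hu).2
      have hbddJ : BddAbove (kSetJ κ p (F u) f) := by
        refine ⟨ε/3, ?_⟩
        rintro x ⟨n, t, m, s, ht, hs, rfl⟩
        exact (hN u hu).1 n t m s ht hs
      have h2 : VKapJ κ p (F u) f ≤ ε/3 := by
        apply csSup_le (kSetJ_nonempty _ _)
        rintro x ⟨n, t, m, s, ht, hs, rfl⟩
        exact (hN u hu).1 n t m s ht hs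
      have h3 : 0 ≤ VKapJ κ p (F u) f :=
        le_trans (VKapPart_nonneg hκ (F u) f trivPartition trivPartition)
          (le_csSup hbddJ ⟨1, fun i => (i:ℝ), 1, fun i => (i:ℝ),
            trivPartition, trivPartition, rfl⟩)
      have hr : rhoKap κ p (F u) f = dist (F u 0 0) (f 0 0) + VKapJ κ p (F u) f := rfl
      rw [Real.dist_eq, sub_zero, abs_of_nonneg (by rw [hr]; positivity), hr]
      linarith
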